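/- Every F[X]-module M that is finite-dimensional over F is isomorphic as an F[X]-module to its F-linear dual M^∨. -/

import Mathlib

open Polynomial

lemma smul_mk_eq {F : Type*} [Field F] {q : F[X]} (r : F[X]) (a : F[X] ⧸ (F[X] ∙ q)) :
    r • a = Submodule.Quotient.mk r * a := by
  obtain ⟨s, rfl⟩ := Submodule.Quotient.mk_surjective _ a
  rw [← Submodule.Quotient.mk_smul]; rfl

lemma cyclic_pairing (F : Type*) [Field F] (q : F[X]) (hq : q ≠ 0) :
    ∃ B : (F[X] ⧸ (F[X] ∙ q)) →ₗ[F] (F[X] ⧸ (F[X] ∙ q)) →ₗ[F] F,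
      (∀ (r : F[X]) (a b), B (r • a) b = B a (r • b)) ∧
      (∀ a, a ≠ 0 → ∃ b, B a b ≠ 0) := by
  classical
  set q' := q * C q.leadingCoeff⁻¹ with hq'
  have hm : q'.Monic := monic_mul_leadingCoeff_inv hq
  have hassoc : Associated q q' := associated_mul_unit_right q _
    (isUnit_C.mpr (isUnit_iff_ne_zero.mpr (inv_ne_zero (leadingCoeff_ne_zero.mpr hq))))
  have hdvd : ∀ r : F[X], q ∣ r ↔ q' ∣ r := fun r => hassoc.dvd_iff_dvd_left
  have hdvd_mem : ∀ {r : F[X]}, q' ∣ r → (Submodule.Quotient.mk r : F[X] ⧸ (F[X] ∙ q)) = 0 := by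
    intro r hr
    obtain ⟨c, rfl⟩ := (hdvd r).mpr hr
    exact (Submodule.Quotient.mk_eq_zero _).mpr
      (Submodule.mem_span_singleton.mpr ⟨c, by rw [smul_eq_mul, mul_comm]⟩)
  set n := q.natDegree with hn
  have hdeg : q'.natDegree = n := by
    rw [hq', natDegree_mul hq (by simp [leadingCoeff_ne_zero.mpr hq]), natDegree_C, add_zero]
  set lam0 : F[X] →ₗ[F] F := (lcoeff F (n - 1)).comp (modByMonicHom q') with hlam0
  have hker : (F[X] ∙ q).restrictScalars F ≤ LinearMap.ker lam0 := by
    intro r hr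
    rw [Submodule.restrictScalars_mem, Submodule.mem_span_singleton] at hr
    obtain ⟨s, rfl⟩ := hr
    have : q' ∣ s • q := (hdvd _).mp ⟨s, by rw [smul_eq_mul, mul_comm]⟩
    simp only [LinearMap.mem_ker, hlam0, LinearMap.comp_apply, modByMonicHom_apply]
    rw [(modByMonic_eq_zero_iff_dvd hm).mpr this]
    simp
  set lam : (F[X] ⧸ (F[X] ∙ q)) →ₗ[F] F :=
    (Submodule.liftQ ((F[X] ∙ q).restrictScalars F) lam0 hker).comp
      (Submodule.Quotient.restrictScalarsEquiv F (F[X] ∙ q)).symm.toLinearMap with hlam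
  have hlam_mk : ∀ r : F[X], lam (Submodule.Quotient.mk r) = (r %ₘ q').coeff (n - 1) := by
    intro r
    have h1 : (Submodule.Quotient.restrictScalarsEquiv F (F[X] ∙ q)).symm
        (Submodule.Quotient.mk r) = Submodule.Quotient.mk r :=
      Submodule.Quotient.restrictScalarsEquiv_symm_mk F _ r
    rw [hlam]
    simp only [LinearMap.comp_apply, LinearEquiv.coe_coe, h1, Submodule.liftQ_apply]
    rfl
  refine ⟨(LinearMap.mul F _).compr₂ lam, ?_, ?_⟩
  · intro r a b
    simp only [LinearMap.compr₂_apply, LinearMap.mul_apply']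
    rw [smul_mk_eq, smul_mk_eq]
    ring_nf
  · intro a ha
    obtain ⟨r, rfl⟩ := Submodule.Quotient.mk_surjective _ a
    set r' := r %ₘ q' with hr'
    have hmkr : (Submodule.Quotient.mk r' : F[X] ⧸ (F[X] ∙ q)) = Submodule.Quotient.mk r := by
      rw [Submodule.Quotient.eq]
      have : r' - r = -(q' * (r /ₘ q')) := by
        rw [hr', modByMonic_eq_sub_mul_div r q']; ring
      rw [Submodule.mem_span_singleton]
      refine ⟨-(C q.leadingCoeff⁻¹ * (r /ₘ q')), ?_⟩
      rw [this, smul_eq_mul, hq']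
      ring
    have hr0 : r' ≠ 0 := by
      intro h
      rw [hr'] at h
      exact ha (hdvd_mem (r := r) ((modByMonic_eq_zero_iff_dvd hm).mp h))
    have hq'0 : q' ≠ 0 := hm.ne_zero
    have hdr : r'.natDegree < n := by
      have := degree_modByMonic_lt r hm
      rw [← hdeg]
      exact natDegree_lt_natDegree hr0 this
    set d := r'.natDegree with hd
    set k := n - 1 - d with hk
    have hdk : d + k = n - 1 := by omega
    refine ⟨Submodule.Quotient.mk (X ^ k), ?_⟩
    simp only [LinearMap.compr₂_apply, LinearMap.mul_apply']
    rw [← hmkr]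
    have hmul : (Submodule.Quotient.mk r' * Submodule.Quotient.mk (X ^ k) :
        F[X] ⧸ (F[X] ∙ q)) = Submodule.Quotient.mk (r' * X ^ k) := rfl
    rw [hmul, hlam_mk]
    have hdegmul : (r' * X ^ k).degree < q'.degree := by
      calc (r' * X ^ k).degree ≤ ((r' * X ^ k).natDegree : WithBot ℕ) := degree_le_natDegree
        _ = ((n - 1 : ℕ) : WithBot ℕ) := by
            rw [natDegree_mul hr0 (pow_ne_zero _ X_ne_zero), natDegree_X_pow, hdk]
        _ < (n : WithBot ℕ) := by exact_mod_cast Nat.sub_lt (by omega) one_pos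
        _ = q'.degree := by rw [← hdeg, degree_eq_natDegree hq'0]
    rw [(modByMonic_eq_self_iff hm).mpr hdegmul]
    rw [← hdk, coeff_mul_X_pow]
    exact leadingCoeff_ne_zero.mpr hr0

open Module

universe u v

/-- The action of `X` on an `F[X]`-module, as an `F`-linear endomorphism. -/
noncomputable def XEnd (F M : Type*) [Field F] [AddCommGroup M] [Module F M]
    [Module F[X] M] [IsScalarTower F F[X] M] : M →ₗ[F] M where
  toFun m := (X : F[X]) • m
  map_add' a b := smul_add _ a b
  map_smul' c m := (smul_comm c (X : F[X]) m).symm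

set_option maxHeartbeats 1000000 in
theorem stmt12_aux {F : Type u} {M : Type v} [Field F] [AddCommGroup M] [Module F M]
    [Module F[X] M] [IsScalarTower F F[X] M] [FiniteDimensional F M] :
    Nonempty (M ≃ₗ[F[X]] Module.AEval' ((XEnd F M).dualMap)) := by
  classical
  haveI : Module.Finite F[X] M := Module.Finite.of_restrictScalars_finite F F[X] M
  let E0 : Module.AEval' (XEnd F M) ≃ₗ[F[X]] M :=
    LinearEquiv.ofAEval (XEnd F M) (LinearEquiv.refl F M) (fun m => rfl)
  have htor : Module.IsTorsion F[X] M := by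
    intro x
    obtain ⟨r, hr⟩ := Module.AEval.isTorsion_of_finiteDimensional F M (XEnd F M) (x := E0.symm x)
    refine ⟨r, ?_⟩
    rw [Submonoid.smul_def] at hr ⊢
    calc (r : F[X]) • x = E0 ((r : F[X]) • E0.symm x) := by
          rw [map_smul, E0.apply_symm_apply]
      _ = 0 := by rw [hr, map_zero]
  -- move to a universe-compatible copy
  let uE : ULift.{u} M ≃ₗ[F[X]] M := ULift.moduleEquiv
  haveI : Module.Finite F[X] (ULift.{u} M) := Module.Finite.equiv uE.symm
  have htor' : Module.IsTorsion F[X] (ULift.{u} M) := by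
    intro x
    obtain ⟨r, hr⟩ := htor (x := uE x)
    refine ⟨r, ?_⟩
    rw [Submonoid.smul_def] at hr ⊢
    apply uE.injective
    rw [map_smul, hr, map_zero]
  obtain ⟨ι, fι, p, hp, e, ⟨f⟩⟩ := Module.equiv_directSum_of_isTorsion htor'
  haveI := fι
  let g : M ≃ₗ[F[X]] DirectSum ι (fun i => F[X] ⧸ Submodule.span F[X] {p i ^ e i}) := uE.symm.trans f
  have hcyc : ∀ i : ι, ∃ B : (F[X] ⧸ (F[X] ∙ p i ^ e i)) →ₗ[F]
      (F[X] ⧸ (F[X] ∙ p i ^ e i)) →ₗ[F] F,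
      (∀ (r : F[X]) (a b), B (r • a) b = B a (r • b)) ∧
      (∀ a, a ≠ 0 → ∃ b, B a b ≠ 0) :=
    fun i => cyclic_pairing F _ (pow_ne_zero _ (hp i).ne_zero)
  choose B hB1 hB2 using hcyc
  let c : ∀ i : ι, M →ₗ[F] F[X] ⧸ (F[X] ∙ p i ^ e i) := fun i =>
    ((DFinsupp.lapply (R := F[X]) i).restrictScalars F).comp (g.restrictScalars F).toLinearMap
  have hc : ∀ (i : ι) (x : M), c i x = (g x) i := fun i x => rfl
  have hcX : ∀ (i : ι) (x : M), c i ((X : F[X]) • x) = (X : F[X]) • c i x := by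
    intro i x
    have h1 : g ((X : F[X]) • x) = (X : F[X]) • g x := map_smul g _ _
    rw [hc, hc, h1]
    rfl
  let BM : M →ₗ[F] Module.Dual F M := ∑ i : ι, (B i).compl₁₂ (c i) (c i)
  have hBM : ∀ x y : M, BM x y = ∑ i : ι, B i (c i x) (c i y) := by
    intro x y
    simp only [BM, LinearMap.coe_sum, Finset.sum_apply, LinearMap.sum_apply,
      LinearMap.compl₁₂_apply]
  have hBMX : ∀ x y : M, BM ((X : F[X]) • x) y = BM x ((X : F[X]) • y) := by
    intro x y
    rw [hBM, hBM]
    refine Finset.sum_congr rfl fun i _ => ?_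
    rw [hcX, hcX, hB1]
  have hinj : Function.Injective BM := by
    rw [← LinearMap.ker_eq_bot, LinearMap.ker_eq_bot']
    intro x hx
    by_contra hx0
    have hgx : g x ≠ 0 := fun h => hx0 (g.map_eq_zero_iff.mp h)
    obtain ⟨i, hi⟩ : ∃ i, (g x) i ≠ 0 := by
      by_contra h
      push_neg at h
      exact hgx (DFinsupp.ext h)
    obtain ⟨b, hb⟩ := hB2 i _ hi
    have hkey : BM x (g.symm (DFinsupp.single i b)) = B i ((g x) i) b := by
      rw [hBM]
      rw [Finset.sum_eq_single i]
      · rw [hc, hc, LinearEquiv.apply_symm_apply, DFinsupp.single_eq_same]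
      · intro j _ hj
        rw [hc, hc, LinearEquiv.apply_symm_apply,
          DFinsupp.single_eq_of_ne hj, map_zero]
      · intro h
        exact absurd (Finset.mem_univ i) h
    rw [hx, LinearMap.zero_apply] at hkey
    exact hb hkey.symm
  let hE : M ≃ₗ[F] Module.Dual F M :=
    BM.linearEquivOfInjective hinj (Subspace.dual_finrank_eq (K := F) (V := M)).symm
  have hE_apply : ∀ x, hE x = BM x := fun x => LinearMap.linearEquivOfInjective_apply hinj _ x
  have key : ∀ m : M, hE ((X : F[X]) • m) = (XEnd F M).dualMap (hE m) := by
    intro m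
    ext y
    rw [hE_apply, LinearMap.dualMap_apply, hE_apply]
    exact hBMX m y
  have hf : ∀ φ : Module.Dual F M,
      hE.symm ((XEnd F M).dualMap • φ) = (X : F[X]) • hE.symm φ := by
    intro φ
    apply hE.injective
    rw [LinearEquiv.apply_symm_apply]
    have h2 := key (hE.symm φ)
    rw [LinearEquiv.apply_symm_apply] at h2
    show (XEnd F M).dualMap φ = hE ((X : F[X]) • hE.symm φ)
    exact h2.symm
  exact ⟨(LinearEquiv.ofAEval ((XEnd F M).dualMap) hE.symm hf).symm⟩

/-- Every `F[X]`-module that is finite-dimensional over `F` is isomorphic, as an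
`F[X]`-module, to its `F`-linear dual (with action `(f·φ)(m) = φ(f·m)`). -/
theorem stmt12 {F M : Type*} [Field F] [AddCommGroup M] [Module F M]
    [Module F[X] M] [IsScalarTower F F[X] M] [FiniteDimensional F M] :
    Nonempty (M ≃ₗ[F[X]] Module.AEval' ((XEnd F M).dualMap)) := by
  exact stmt12_aux
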